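/- arXiv:0901.0794 — 3 statements merged into one kernel-verified Lean document; each statement's English description precedes it below -/
import Mathlib

section
/- For real λ, naturals m, j, k, n with the Pochhammer symbol (x)_r = x(x+1)···(x+r-1), the following recursion holds: C(n,k)·(j+1)_k·(2λ-m+2j+k)_{n-k}·(2λ-m+2j+k+n) + C(n,k-1)·(j+1)_k·(2λ-m+2j+k-1)_{n-k+1} = C(n+1,k)·(j+1)_k·(2λ-m+2j+k)_{n+1-k}, where C(n,k) denotes the binomial coefficient (equal to 0 if k > n or k < 0). -/
/-- The coefficient recursion
`C(n,k)(j+1)_k(2λ-m+2j+k)_{n-k}(2λ-m+2j+k+n) + C(n,k-1)(j+1)_k(2λ-m+2j+k-1)_{n-k+1}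
  = C(n+1,k)(j+1)_k(2λ-m+2j+k)_{n+1-k}`,
with `C(n,k) = 0` for `k > n` or `k < 0` (the `k = 0` second term is `0`). -/
theorem pochhammer_binomial_recursion (lam : ℝ) (m j k n : ℕ) :
    (n.choose k : ℝ) * Polynomial.eval ((j : ℝ) + 1) (ascPochhammer ℝ k)
        * Polynomial.eval (2 * lam - m + 2 * j + k) (ascPochhammer ℝ (n - k))
        * (2 * lam - m + 2 * j + k + n)
      + (if k = 0 then 0 else (n.choose (k - 1) : ℝ))
          * Polynomial.eval ((j : ℝ) + 1) (ascPochhammer ℝ k)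
          * Polynomial.eval (2 * lam - m + 2 * j + k - 1) (ascPochhammer ℝ (n + 1 - k))
    = ((n + 1).choose k : ℝ) * Polynomial.eval ((j : ℝ) + 1) (ascPochhammer ℝ k)
        * Polynomial.eval (2 * lam - m + 2 * j + k) (ascPochhammer ℝ (n + 1 - k)) := by
  rcases Nat.lt_or_ge n k with h | h
  · rcases Nat.lt_or_ge (n + 1) k with h2 | h2
    · have hk : k ≠ 0 := by omega
      simp [hk, Nat.choose_eq_zero_of_lt h, Nat.choose_eq_zero_of_lt h2,
        Nat.choose_eq_zero_of_lt (show n < k - 1 by omega)]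
    · have hk : k = n + 1 := by omega
      subst hk
      simp [Nat.choose_eq_zero_of_lt (Nat.lt_succ_self n), Nat.choose_self,
        Nat.succ_sub_one]
  · rcases Nat.eq_zero_or_pos k with hk | hk
    · subst hk
      simp only [Nat.sub_zero, Nat.add_sub_cancel, Nat.choose_zero_right,
        ascPochhammer_succ_right, Polynomial.eval_mul, Polynomial.eval_add,
        Polynomial.eval_X, Polynomial.eval_natCast, if_true]
      push_cast
      ring
    · obtain ⟨k', rfl⟩ : ∃ k', k = k' + 1 := ⟨k - 1, by omega⟩
      have h1 : n + 1 - (k' + 1) = (n - (k' + 1)) + 1 := by omega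
      have hnk : ((n - (k' + 1) : ℕ) : ℝ) = (n : ℝ) - (k' + 1) := by
        push_cast [Nat.cast_sub h]; ring
      have hc1 : ((n + 1).choose (k' + 1) : ℝ) = n.choose (k' + 1) + n.choose k' := by
        rw [Nat.choose_succ_succ]; push_cast; ring
      have hc2 : (n.choose (k' + 1) : ℝ) * (k' + 1) = n.choose k' * ((n : ℝ) - (k' + 1) + 1) := by
        have h2 := Nat.choose_succ_right_eq n k'
        have h3 := congrArg (fun x : ℕ => (x : ℝ)) h2
        push_cast [Nat.cast_sub (show k' ≤ n by omega)] at h3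
        rw [h3]; ring
      have key : Polynomial.eval (2 * lam - (m:ℝ) + 2 * j + (k'+1 : ℕ) - 1)
          (ascPochhammer ℝ ((n - (k' + 1)) + 1))
          = (2 * lam - (m:ℝ) + 2 * j + (k'+1 : ℕ) - 1) *
            Polynomial.eval (2 * lam - (m:ℝ) + 2 * j + (k'+1 : ℕ))
              (ascPochhammer ℝ (n - (k' + 1))) := by
        rw [ascPochhammer_succ_left]
        simp only [Polynomial.eval_mul, Polynomial.eval_comp, Polynomial.eval_add,
          Polynomial.eval_X, Polynomial.eval_one]
        rw [show (2 * lam - (m:ℝ) + 2 * j + (k'+1 : ℕ) - 1 + 1)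
            = 2 * lam - (m:ℝ) + 2 * j + (k'+1 : ℕ) by ring]
      rw [h1, key]
      simp only [Nat.succ_ne_zero, if_false, ascPochhammer_succ_right,
        Polynomial.eval_mul, Polynomial.eval_add, Polynomial.eval_X,
        Polynomial.eval_natCast]
      rw [hc1, hnk]
      push_cast
      set A := Polynomial.eval (2 * lam - (m:ℝ) + 2 * j + ((k':ℝ)+1)) (ascPochhammer ℝ (n - (k' + 1))) with hA
      linear_combination (Polynomial.eval ((j:ℝ) + 1) (ascPochhammer ℝ k') * ((j:ℝ) + 1 + k')) * A * hc2
end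

section
/- Let λ be real and m a natural number. Then the following are equivalent: (i) 2λ > m; (ii) for all integers j with 0 ≤ j ≤ m and all n ≥ 1, the quantity (2λ - m + 2j)_n · n! is strictly positive, where (x)_n = x(x+1)···(x+n-1). -/
/-- For real `λ` and natural `m`, the following are equivalent:
(i) `2λ > m`; (ii) for all `0 ≤ j ≤ m` and `n ≥ 1`,
`(2λ - m + 2j)_n · n! > 0`. -/
theorem positivity_iff_two_lambda_gt_m (lam : ℝ) (m : ℕ) :
    (2 * lam > m) ↔
      (∀ j : ℕ, j ≤ m → ∀ n : ℕ, 1 ≤ n →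
        0 < Polynomial.eval (2 * lam - m + 2 * j) (ascPochhammer ℝ n) * n.factorial) := by
  constructor
  · intro h j _ n _
    have hx : (0:ℝ) < 2 * lam - m + 2 * j := by
      have : (0:ℝ) ≤ 2 * j := by positivity
      linarith
    exact mul_pos (ascPochhammer_pos n _ hx) (by exact_mod_cast n.factorial_pos)
  · intro h
    have := h 0 (Nat.zero_le m) 1 le_rfl
    simp [ascPochhammer_one] at this
    linarith
end

section
/- Let 2λ > 1 and n ≥ 1. Define the 2×2 matrices G(n) = [[√((2λ-1)_n/n!), 0], [√(n/(2λ-1))·√((2λ)_{n-1}/(n-1)!), √((2λ+1)_{n-1}/(n-1)!)]] and, for μ₁ > 0, W(n) = [[√((n+1)/(2λ+n-1)), 0], [-(1/μ₁)·√(2λ/(2λ-1))·√(1/((2λ+n-1)(2λ+n))), √(n/(2λ+n))]]. Then G(n)·diag(1, μ₁) = G(n+1)·diag(1, μ₁)·W(n); equivalently, W(n) = diag(1,μ₁)^{-1}·G(n+1)^{-1}·G(n)·diag(1,μ₁). -/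
private lemma poch_shift (k : ℕ) (x : ℝ) :
    x * Polynomial.eval (x + 1) (ascPochhammer ℝ k)
      = Polynomial.eval x (ascPochhammer ℝ k) * (x + k) := by
  induction k with
  | zero => simp
  | succ k ih =>
      rw [ascPochhammer_succ_eval, ascPochhammer_succ_eval]
      push_cast
      linear_combination (x + 1 + (k : ℝ)) * ih



open Matrix

/-- For `2λ > 1`, `n ≥ 1`, `μ₁ > 0`, the change-of-basis matrices
`G(n)` and the weighted-shift blocks `W(n)` (case `m = 1`) satisfy
`G(n)·diag(1,μ₁) = G(n+1)·diag(1,μ₁)·W(n)`,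
i.e. `W(n) = diag(1,μ₁)⁻¹·G(n+1)⁻¹·G(n)·diag(1,μ₁)`. -/
theorem shift_block_relation (lam : ℝ) (hlam : 1 < 2 * lam) (mu : ℝ) (hmu : 0 < mu)
    (G : ℕ → Matrix (Fin 2) (Fin 2) ℝ)
    (hG : ∀ n : ℕ,
      G n = !![Real.sqrt (Polynomial.eval (2 * lam - 1) (ascPochhammer ℝ n) / n.factorial), 0;
        Real.sqrt ((n : ℝ) / (2 * lam - 1))
          * Real.sqrt (Polynomial.eval (2 * lam) (ascPochhammer ℝ (n - 1)) / (n - 1).factorial),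
        Real.sqrt (Polynomial.eval (2 * lam + 1) (ascPochhammer ℝ (n - 1)) / (n - 1).factorial)])
    (W : ℕ → Matrix (Fin 2) (Fin 2) ℝ)
    (hW : ∀ n : ℕ,
      W n = !![Real.sqrt (((n : ℝ) + 1) / (2 * lam + n - 1)), 0;
        -(1 / mu) * Real.sqrt (2 * lam / (2 * lam - 1))
          * Real.sqrt (1 / ((2 * lam + n - 1) * (2 * lam + n))),
        Real.sqrt ((n : ℝ) / (2 * lam + n))])
    (n : ℕ) (hn : 1 ≤ n) :
    G n * Matrix.diagonal ![1, mu] = G (n + 1) * Matrix.diagonal ![1, mu] * W n := by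
  obtain ⟨m, rfl⟩ : ∃ m, n = m + 1 := ⟨n - 1, (Nat.succ_pred_eq_of_pos hn).symm⟩
  have hx1 : (0:ℝ) < 2 * lam - 1 := by linarith
  have hx : (0:ℝ) < 2 * lam := by linarith
  have hm : (0:ℝ) ≤ (m:ℝ) := Nat.cast_nonneg m
  have hxm : (0:ℝ) < 2 * lam + m := by linarith
  have hxm1 : (0:ℝ) < 2 * lam + m + 1 := by linarith
  have hF0 : (0:ℝ) < (m.factorial : ℝ) := by exact_mod_cast m.factorial_pos
  have hF1 : (0:ℝ) < ((m+1).factorial : ℝ) := by exact_mod_cast (m+1).factorial_pos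
  -- goal 1
  have g1 : Real.sqrt (Polynomial.eval (2 * lam - 1) (ascPochhammer ℝ (m + 1))) / Real.sqrt (((m + 1).factorial : ℝ)) =
      Real.sqrt (Polynomial.eval (2 * lam - 1) (ascPochhammer ℝ (m + 1 + 1))) / Real.sqrt (((m + 1 + 1).factorial : ℝ)) *
        Real.sqrt (((m:ℝ) + 1 + 1) / (2 * lam + ((m:ℝ) + 1) - 1)) := by
    have hP : 0 < Polynomial.eval (2 * lam - 1) (ascPochhammer ℝ (m+1)) := ascPochhammer_pos _ _ hx1
    have hP2 : 0 < Polynomial.eval (2 * lam - 1) (ascPochhammer ℝ (m+1+1)) := ascPochhammer_pos _ _ hx1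
    rw [← Real.sqrt_div hP.le, ← Real.sqrt_div hP2.le,
      ← Real.sqrt_mul (div_nonneg hP2.le (Nat.cast_nonneg _))]
    congr 1
    have h2 : (2 * lam + ((m:ℝ) + 1) - 1) ≠ 0 := ne_of_gt (by linarith)
    rw [ascPochhammer_succ_eval (m+1) (2*lam-1), Nat.factorial_succ (m+1), Nat.cast_mul]
    push_cast
    field_simp
    ring
  -- goal 3
  have g3 : Real.sqrt (Polynomial.eval (2 * lam + 1) (ascPochhammer ℝ m)) / Real.sqrt ((m.factorial : ℝ)) * mu =
      Real.sqrt (Polynomial.eval (2 * lam + 1) (ascPochhammer ℝ (m + 1))) / Real.sqrt (((m + 1).factorial : ℝ)) * mu *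
        Real.sqrt (((m:ℝ) + 1) / (2 * lam + ((m:ℝ) + 1))) := by
    have hQ : 0 < Polynomial.eval (2 * lam + 1) (ascPochhammer ℝ m) := ascPochhammer_pos _ _ (by linarith)
    have hQ1 : 0 < Polynomial.eval (2 * lam + 1) (ascPochhammer ℝ (m+1)) := ascPochhammer_pos _ _ (by linarith)
    have key : Real.sqrt (Polynomial.eval (2 * lam + 1) (ascPochhammer ℝ m)) / Real.sqrt ((m.factorial : ℝ)) =
        Real.sqrt (Polynomial.eval (2 * lam + 1) (ascPochhammer ℝ (m + 1))) / Real.sqrt (((m + 1).factorial : ℝ)) *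
          Real.sqrt (((m:ℝ) + 1) / (2 * lam + ((m:ℝ) + 1))) := by
      rw [← Real.sqrt_div hQ.le, ← Real.sqrt_div hQ1.le,
        ← Real.sqrt_mul (div_nonneg hQ1.le (Nat.cast_nonneg _))]
      congr 1
      rw [ascPochhammer_succ_eval m (2*lam+1), Nat.factorial_succ m, Nat.cast_mul]
      push_cast
      field_simp
      ring
    linear_combination mu * key
  -- goal 2
  have hP0 : 0 < Polynomial.eval (2 * lam) (ascPochhammer ℝ m) := ascPochhammer_pos _ _ hx
  have hP1 : 0 < Polynomial.eval (2 * lam) (ascPochhammer ℝ (m+1)) := ascPochhammer_pos _ _ hx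
  have hQ1 : 0 < Polynomial.eval (2 * lam + 1) (ascPochhammer ℝ (m+1)) := ascPochhammer_pos _ _ (by linarith)
  have hkey : 2 * lam * Polynomial.eval (2 * lam + 1) (ascPochhammer ℝ (m+1)) =
      Polynomial.eval (2 * lam) (ascPochhammer ℝ m) * (2 * lam + m) * (2 * lam + m + 1) := by
    rw [ascPochhammer_succ_eval m (2*lam+1)]
    linear_combination (2 * lam + 1 + (m:ℝ)) * poch_shift m (2*lam)
  have g2 : Real.sqrt (((m:ℝ) + 1) / (2 * lam - 1)) * (Real.sqrt (Polynomial.eval (2 * lam) (ascPochhammer ℝ m)) / Real.sqrt ((m.factorial : ℝ))) =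
      Real.sqrt (((m:ℝ) + 1 + 1) / (2 * lam - 1)) * (Real.sqrt (Polynomial.eval (2 * lam) (ascPochhammer ℝ (m + 1))) / Real.sqrt (((m+1).factorial : ℝ))) *
          Real.sqrt (((m:ℝ) + 1 + 1) / (2 * lam + ((m:ℝ) + 1) - 1)) +
        -(Real.sqrt (Polynomial.eval (2 * lam + 1) (ascPochhammer ℝ (m + 1))) / Real.sqrt (((m+1).factorial : ℝ)) * mu *
          (mu⁻¹ * Real.sqrt (2 * lam / (2 * lam - 1)) * Real.sqrt ((2 * lam + ((m:ℝ) + 1))⁻¹ * (2 * lam + ((m:ℝ) + 1) - 1)⁻¹))) := by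
    have e1 : Real.sqrt (((m:ℝ) + 1) / (2 * lam - 1)) * (Real.sqrt (Polynomial.eval (2 * lam) (ascPochhammer ℝ m)) / Real.sqrt ((m.factorial : ℝ))) =
        ((m:ℝ) + 1) * Real.sqrt (Polynomial.eval (2 * lam) (ascPochhammer ℝ m) / ((2 * lam - 1) * ((m+1).factorial : ℝ))) := by
      rw [← Real.sqrt_div hP0.le, ← Real.sqrt_mul (by positivity : (0:ℝ) ≤ ((m:ℝ) + 1) / (2 * lam - 1))]
      rw [show ((m:ℝ) + 1) / (2 * lam - 1) * (Polynomial.eval (2 * lam) (ascPochhammer ℝ m) / (m.factorial : ℝ)) =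
          ((m:ℝ) + 1)^2 * (Polynomial.eval (2 * lam) (ascPochhammer ℝ m) / ((2 * lam - 1) * ((m+1).factorial : ℝ))) from by
        rw [Nat.factorial_succ m, Nat.cast_mul]; push_cast; field_simp]
      rw [Real.sqrt_mul (sq_nonneg _), Real.sqrt_sq (by positivity)]
    have e2 : Real.sqrt (((m:ℝ) + 1 + 1) / (2 * lam - 1)) * (Real.sqrt (Polynomial.eval (2 * lam) (ascPochhammer ℝ (m + 1))) / Real.sqrt (((m+1).factorial : ℝ))) *
          Real.sqrt (((m:ℝ) + 1 + 1) / (2 * lam + ((m:ℝ) + 1) - 1)) =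
        ((m:ℝ) + 1 + 1) * Real.sqrt (Polynomial.eval (2 * lam) (ascPochhammer ℝ m) / ((2 * lam - 1) * ((m+1).factorial : ℝ))) := by
      rw [← Real.sqrt_div hP1.le, ← Real.sqrt_mul (by positivity : (0:ℝ) ≤ ((m:ℝ) + 1 + 1) / (2 * lam - 1)),
        ← Real.sqrt_mul (by positivity)]
      rw [show ((m:ℝ) + 1 + 1) / (2 * lam - 1) * (Polynomial.eval (2 * lam) (ascPochhammer ℝ (m+1)) / ((m+1).factorial : ℝ)) *
            (((m:ℝ) + 1 + 1) / (2 * lam + ((m:ℝ) + 1) - 1)) =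
          ((m:ℝ) + 1 + 1)^2 * (Polynomial.eval (2 * lam) (ascPochhammer ℝ m) / ((2 * lam - 1) * ((m+1).factorial : ℝ))) from by
        rw [ascPochhammer_succ_eval m (2*lam)]
        have h2 : (2 * lam + ((m:ℝ) + 1) - 1) ≠ 0 := ne_of_gt (by linarith)
        field_simp
        ring]
      rw [Real.sqrt_mul (sq_nonneg _), Real.sqrt_sq (by positivity)]
    have e3 : Real.sqrt (Polynomial.eval (2 * lam + 1) (ascPochhammer ℝ (m + 1))) / Real.sqrt (((m+1).factorial : ℝ)) * mu *
          (mu⁻¹ * Real.sqrt (2 * lam / (2 * lam - 1)) * Real.sqrt ((2 * lam + ((m:ℝ) + 1))⁻¹ * (2 * lam + ((m:ℝ) + 1) - 1)⁻¹)) =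
        Real.sqrt (Polynomial.eval (2 * lam) (ascPochhammer ℝ m) / ((2 * lam - 1) * ((m+1).factorial : ℝ))) := by
      rw [← Real.sqrt_div hQ1.le]
      rw [show Real.sqrt (Polynomial.eval (2 * lam + 1) (ascPochhammer ℝ (m+1)) / ((m+1).factorial : ℝ)) * mu *
            (mu⁻¹ * Real.sqrt (2 * lam / (2 * lam - 1)) * Real.sqrt ((2 * lam + ((m:ℝ) + 1))⁻¹ * (2 * lam + ((m:ℝ) + 1) - 1)⁻¹)) =
          (mu * mu⁻¹) * (Real.sqrt (Polynomial.eval (2 * lam + 1) (ascPochhammer ℝ (m+1)) / ((m+1).factorial : ℝ)) *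
            (Real.sqrt (2 * lam / (2 * lam - 1)) *
              Real.sqrt ((2 * lam + ((m:ℝ) + 1))⁻¹ * (2 * lam + ((m:ℝ) + 1) - 1)⁻¹))) from by ring,
        mul_inv_cancel₀ hmu.ne', one_mul,
        ← Real.sqrt_mul (by positivity : (0:ℝ) ≤ 2 * lam / (2 * lam - 1)),
        ← Real.sqrt_mul (div_nonneg hQ1.le (Nat.cast_nonneg _))]
      congr 1
      have h2 : (2 * lam + ((m:ℝ) + 1) - 1) ≠ 0 := ne_of_gt (by linarith)
      have h3 : (2 * lam + ((m:ℝ) + 1)) ≠ 0 := ne_of_gt (by linarith)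
      field_simp
      linear_combination hkey
    rw [e1, e2, e3]
    ring
  have hD : (Matrix.diagonal ![1, mu] : Matrix (Fin 2) (Fin 2) ℝ) = !![1,0;0,mu] := by
    ext i j; fin_cases i <;> fin_cases j <;> simp [Matrix.diagonal]
  rw [hG, hG, hW, hD, Matrix.mul_fin_two, Matrix.mul_fin_two, Matrix.mul_fin_two]
  ext i j
  fin_cases i <;> fin_cases j <;> simp <;> push_cast <;>
    first | exact g1 | exact g2 | exact g3 | linarith [g1, g2, g3]
end
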